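/- Let Q be the n×n tridiagonal matrix with diagonal entries -v_1,...,-v_n (each v_i ≥ 2) and 1's on the super- and sub-diagonals. Then Q is invertible and every entry of Q^{-1} is strictly negative. -/
import Mathlib


open Matrix

/-- The tridiagonal matrix with diagonal entries `-v i` and `1`'s on the
super- and sub-diagonal. -/
def triQ {n : ℕ} (v : Fin n → ℤ) : Matrix (Fin n) (Fin n) ℝ :=
  Matrix.of fun i j =>
    if i = j then -(v i : ℝ)
    else if (i : ℕ) + 1 = (j : ℕ) ∨ (j : ℕ) + 1 = (i : ℕ) then 1 else 0

noncomputable section TriAux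

variable {n : ℕ} (v : Fin n → ℤ)

def uext : ℕ → ℝ := fun k => if h : k < n then (v ⟨k, h⟩ : ℝ) else 2

def tQ : ℕ → ℕ → ℝ := fun a c =>
  if a = c then -(uext v a) else if a + 1 = c ∨ c + 1 = a then 1 else 0

def ctd (u : ℕ → ℝ) : ℕ → ℝ
  | 0 => 0
  | 1 => 1
  | (m+2) => u m * ctd u (m+1) - ctd u m

lemma ctd_zero (u : ℕ → ℝ) : ctd u 0 = 0 := rfl
lemma ctd_one (u : ℕ → ℝ) : ctd u 1 = 1 := rfl
lemma ctd_rec (u : ℕ → ℝ) (m : ℕ) : ctd u (m+2) = u m * ctd u (m+1) - ctd u m := rfl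

lemma ctd_grow (u : ℕ → ℝ) (hu : ∀ k, (2:ℝ) ≤ u k) :
    ∀ m, 0 ≤ ctd u m ∧ ctd u m + 1 ≤ ctd u (m+1)
  | 0 => by simp [ctd_zero, ctd_one]
  | (m+1) => by
    obtain ⟨h0, h1⟩ := ctd_grow u hu m
    refine ⟨by linarith, ?_⟩
    rw [ctd_rec]
    nlinarith [hu m]

lemma ctd_pos (u : ℕ → ℝ) (hu : ∀ k, (2:ℝ) ≤ u k) {m : ℕ} (hm : 1 ≤ m) :
    0 < ctd u m := by
  obtain ⟨m, rfl⟩ := Nat.exists_eq_add_of_le hm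
  obtain ⟨h0, h1⟩ := ctd_grow u hu m
  rw [Nat.add_comm]
  linarith

def tA : ℕ → ℝ := ctd (uext v)
def pS : ℕ → ℝ := ctd (fun k => uext v (n - 1 - k))
def bE : ℕ → ℕ → ℝ := fun a c => tA v (min a c + 1) * pS v (n - max a c)

variable (hv : ∀ i, 2 ≤ v i)

section hyp
variable {v}

include hv in
lemma uext_ge (k : ℕ) : (2:ℝ) ≤ uext v k := by
  unfold uext; split
  · have := hv ⟨k, ‹_›⟩; exact_mod_cast this
  · exact le_refl 2

lemma psrec {i : ℕ} (hi : i < n) :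
    pS v (n - i + 1) = uext v i * pS v (n - i) - pS v (n - i - 1) := by
  have h := ctd_rec (fun k => uext v (n - 1 - k)) (n - 1 - i)
  have e1 : n - 1 - i + 2 = n - i + 1 := by omega
  have e2 : n - 1 - i + 1 = n - i := by omega
  have e3 : n - 1 - (n - 1 - i) = i := by omega
  have e4 : n - 1 - i = n - i - 1 := by omega
  rw [e1, e2, e3, e4] at h
  simpa [pS] using h

lemma cross : ∀ i ≤ n, tA v (i+1) * pS v (n - i + 1) - tA v i * pS v (n - i) = pS v (n+1)
  | 0, _ => by simp [tA, ctd_zero, ctd_one]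
  | (i+1), h => by
    have hIH := cross i (by omega)
    have hps := psrec (v := v) (show i < n by omega)
    have ht := ctd_rec (uext v) i
    have e1 : n - (i+1) + 1 = n - i := by omega
    have e2 : n - (i+1) = n - i - 1 := by omega
    rw [e1, e2]
    show tA v (i+2) * pS v (n-i) - tA v (i+1) * pS v (n-i-1) = pS v (n+1)
    have ht' : tA v (i+2) = uext v i * tA v (i+1) - tA v i := ht
    linear_combination hIH + pS v (n-i) * ht' - tA v (i+1) * hps


lemma threeTerm {i j : ℕ} (hi : i < n) (hj : j < n) :
    (if 0 < i then bE v (i-1) j else 0) - uext v i * bE v i j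
      + (if i + 1 < n then bE v (i+1) j else 0)
      = if i = j then -(pS v (n+1)) else 0 := by
  have hps : pS v (n - i + 1) = uext v i * pS v (n - i) - pS v (n - i - 1) :=
    psrec (v := v) hi
  rcases lt_trichotomy i j with hlt | heq | hgt
  · -- i < j
    have h1 : (if 0 < i then bE v (i-1) j else 0) = tA v i * pS v (n - j) := by
      rcases Nat.eq_zero_or_pos i with h | h
      · subst h; simp [tA, ctd_zero]
      · rw [if_pos h]
        have : min (i-1) j = i - 1 := by omega
        have hmax : max (i-1) j = j := by omega
        have : i - 1 + 1 = i := by omega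
        simp only [bE, ‹min (i-1) j = i-1›, hmax, ‹i-1+1 = i›]
    have h3 : (if i + 1 < n then bE v (i+1) j else 0) = tA v (i+2) * pS v (n - j) := by
      rw [if_pos (by omega)]
      have hmin : min (i+1) j = i + 1 := by omega
      have hmax : max (i+1) j = j := by omega
      simp only [bE, hmin, hmax]
    have h2 : bE v i j = tA v (i+1) * pS v (n - j) := by
      have hmin : min i j = i := by omega
      have hmax : max i j = j := by omega
      simp only [bE, hmin, hmax]
    rw [h1, h2, h3, if_neg (by omega)]
    have ht : tA v (i+2) = uext v i * tA v (i+1) - tA v i := ctd_rec (uext v) i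
    linear_combination pS v (n - j) * ht
  · -- i = j
    subst heq
    have h1 : (if 0 < i then bE v (i-1) i else 0) = tA v i * pS v (n - i) := by
      rcases Nat.eq_zero_or_pos i with h | h
      · subst h; simp [tA, ctd_zero]
      · rw [if_pos h]
        have hmin : min (i-1) i = i - 1 := by omega
        have hmax : max (i-1) i = i := by omega
        have he : i - 1 + 1 = i := by omega
        simp only [bE, hmin, hmax, he]
    have h3 : (if i + 1 < n then bE v (i+1) i else 0) = tA v (i+1) * pS v (n - i - 1) := by
      rcases Nat.lt_or_ge (i+1) n with h | h
      · rw [if_pos h]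
        have hmin : min (i+1) i = i := by omega
        have hmax : max (i+1) i = i + 1 := by omega
        have he : n - (i+1) = n - i - 1 := by omega
        simp only [bE, hmin, hmax, he]
      · rw [if_neg (by omega)]
        have he : n - i - 1 = 0 := by omega
        rw [he]
        simp [pS, ctd_zero]
    have h2 : bE v i i = tA v (i+1) * pS v (n - i) := by
      simp only [bE, min_self, max_self]
    have hc : tA v (i+1) * pS v (n - i + 1) - tA v i * pS v (n - i) = pS v (n+1) :=
      cross (v := v) i (by omega)
    rw [h1, h2, h3, if_pos rfl]
    linear_combination -hc + tA v (i+1) * hps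
  · -- j < i
    have h1 : (if 0 < i then bE v (i-1) j else 0) = tA v (j+1) * pS v (n - i + 1) := by
      rw [if_pos (by omega)]
      have hmin : min (i-1) j = j := by omega
      have hmax : max (i-1) j = i - 1 := by omega
      have he : n - (i - 1) = n - i + 1 := by omega
      simp only [bE, hmin, hmax, he]
    have h2 : bE v i j = tA v (j+1) * pS v (n - i) := by
      have hmin : min i j = j := by omega
      have hmax : max i j = i := by omega
      simp only [bE, hmin, hmax]
    have h3 : (if i + 1 < n then bE v (i+1) j else 0) = tA v (j+1) * pS v (n - i - 1) := by
      rcases Nat.lt_or_ge (i+1) n with h | h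
      · rw [if_pos h]
        have hmin : min (i+1) j = j := by omega
        have hmax : max (i+1) j = i + 1 := by omega
        have he : n - (i+1) = n - i - 1 := by omega
        simp only [bE, hmin, hmax, he]
      · rw [if_neg (by omega)]
        have he : n - i - 1 = 0 := by omega
        rw [he]
        simp [pS, ctd_zero]
    rw [h1, h2, h3, if_neg (by omega)]
    linear_combination tA v (j+1) * hps

include hv in
lemma psu_ge (k : ℕ) : (2:ℝ) ≤ uext v (n - 1 - k) := uext_ge hv _

include hv in
lemma pS_pos {m : ℕ} (hm : 1 ≤ m) : 0 < pS v m :=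
  ctd_pos _ (psu_ge hv) hm

include hv in
lemma tA_pos {m : ℕ} (hm : 1 ≤ m) : 0 < tA v m :=
  ctd_pos _ (fun k => uext_ge hv k) hm

end hyp

def BB : Matrix (Fin n) (Fin n) ℝ :=
  Matrix.of fun i j => -(bE v i.val j.val) / pS v (n+1)

variable {v}

lemma triQ_apply (i j : Fin n) : triQ v i j = tQ v i.val j.val := by
  simp only [triQ, tQ, Matrix.of_apply, Fin.ext_iff]
  split
  · simp [uext]
  · rfl

omit hv in
lemma tQ_decomp (i j : Fin n) (k : ℕ) :
    tQ v i.val k * bE v k j.val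
      = (if k + 1 = i.val then bE v k j.val else 0)
      + (if k = i.val then -(uext v i.val) * bE v k j.val else 0)
      + (if k = i.val + 1 then bE v k j.val else 0) := by
  by_cases h1 : k = i.val
  · subst h1
    rw [tQ, if_pos rfl, if_neg (by omega), if_pos rfl, if_neg (by omega)]
    ring
  · by_cases h2 : k + 1 = i.val
    · rw [tQ, if_neg (by omega), if_pos (Or.inr h2), if_pos h2, if_neg h1,
        if_neg (by omega)]
      ring
    · by_cases h3 : k = i.val + 1
      · rw [tQ, if_neg (by omega), if_pos (Or.inl h3.symm), if_neg (by omega),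
          if_neg h1, if_pos h3]
        ring
      · rw [tQ, if_neg (by omega), if_neg (by omega), if_neg (by omega),
          if_neg h1, if_neg h3]
        ring

include hv in
lemma mul_BB : triQ v * BB v = 1 := by
  have hD : 0 < pS v (n+1) := pS_pos hv (by omega)
  ext i j
  rw [Matrix.mul_apply, Matrix.one_apply]
  have step1 : ∀ k : Fin n, triQ v i k * BB v k j
      = (-(pS v (n+1))⁻¹) * (tQ v i.val k.val * bE v k.val j.val) := by
    intro k
    rw [triQ_apply]
    simp only [BB, Matrix.of_apply, div_eq_mul_inv]
    ring
  rw [Finset.sum_congr rfl (fun k _ => step1 k)]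
  rw [← Finset.mul_sum]
  have step2 : (∑ k : Fin n, tQ v i.val k.val * bE v k.val j.val)
      = ∑ k ∈ Finset.range n, tQ v i.val k * bE v k j.val :=
    Fin.sum_univ_eq_sum_range (fun k => tQ v i.val k * bE v k j.val) n
  rw [step2, Finset.sum_congr rfl (fun k _ => tQ_decomp i j k),
    Finset.sum_add_distrib, Finset.sum_add_distrib]
  have s1 : (∑ k ∈ Finset.range n, if k + 1 = i.val then bE v k j.val else 0)
      = if 0 < i.val then bE v (i.val - 1) j.val else 0 := by
    rcases Nat.eq_zero_or_pos i.val with h | h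
    · rw [h, if_neg (by omega)]
      apply Finset.sum_eq_zero
      intro k _
      rw [if_neg (by omega)]
    · rw [if_pos h]
      rw [Finset.sum_congr rfl (fun k _ =>
        show (if k + 1 = i.val then bE v k j.val else 0)
            = (if k = i.val - 1 then bE v k j.val else 0) by
          split_ifs with ha hb <;> first | rfl | omega)]
      rw [Finset.sum_ite_eq' (Finset.range n) (i.val - 1)
        (fun k => bE v k j.val), if_pos (by simp; omega)]
  have s2 : (∑ k ∈ Finset.range n, if k = i.val then -(uext v i.val) * bE v k j.val else 0)
      = -(uext v i.val) * bE v i.val j.val := by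
    rw [Finset.sum_ite_eq' (Finset.range n) i.val
      (fun k => -(uext v i.val) * bE v k j.val), if_pos (by simp [i.isLt])]
  have s3 : (∑ k ∈ Finset.range n, if k = i.val + 1 then bE v k j.val else 0)
      = if i.val + 1 < n then bE v (i.val + 1) j.val else 0 := by
    rw [Finset.sum_ite_eq' (Finset.range n) (i.val + 1) (fun k => bE v k j.val)]
    simp
  rw [s1, s2, s3]
  have key := threeTerm (v := v) i.isLt j.isLt
  have : (if 0 < i.val then bE v (i.val-1) j.val else 0) + -(uext v i.val) * bE v i.val j.val
      + (if i.val + 1 < n then bE v (i.val+1) j.val else 0)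
      = if i.val = j.val then -(pS v (n+1)) else 0 := by
    rw [← key]; ring
  rw [this]
  by_cases hij : i = j
  · rw [if_pos (by rw [hij]), if_pos hij]
    field_simp
  · rw [if_neg (by rw [Fin.ext_iff] at hij; exact hij), if_neg hij]
    ring

end TriAux

theorem stmt3 {n : ℕ} (v : Fin n → ℤ) (hv : ∀ i, 2 ≤ v i) :
    IsUnit (triQ v).det ∧ ∀ i j, (triQ v)⁻¹ i j < 0 := by
  have hmul : triQ v * BB v = 1 := mul_BB hv
  refine ⟨Matrix.isUnit_det_of_right_inverse hmul, ?_⟩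
  intro i j
  rw [Matrix.inv_eq_right_inv hmul]
  show -(bE v i.val j.val) / pS v (n+1) < 0
  apply div_neg_of_neg_of_pos
  · have h1 : 0 < tA v (min i.val j.val + 1) := tA_pos hv (by omega)
    have h2 : 0 < pS v (n - max i.val j.val) :=
      pS_pos hv (by have := i.isLt; have := j.isLt; omega)
    have h3 : 0 < bE v i.val j.val := mul_pos h1 h2
    linarith
  · exact pS_pos hv (by omega)
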